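/- Let H be a real Hilbert space and let f, g ∈ Γ0(H). If for every x ∈ H the subdifferentials ∂f(x) and ∂g(x) have the same element of minimal norm whenever they are nonempty (i.e., the projection of 0 onto ∂f(x) equals the projection of 0 onto ∂g(x) for all x ∈ H), then ∂f(x) = ∂g(x) for all x ∈ H. -/

import Mathlib

open Filter Topology Set
set_option linter.unusedSectionVars false
set_option maxHeartbeats 1000000


open scoped InnerProductSpace
noncomputable section

variable {H : Type*} [NormedAddCommGroup H] [InnerProductSpace ℝ H] [CompleteSpace H]

/-- Convexity for extended-real-valued functions on a real Hilbert space. -/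
def ERealConvexOn (f : H → EReal) : Prop :=
  ∀ x y : H, ∀ a b : ℝ, 0 ≤ a → 0 ≤ b → a + b = 1 →
    f (a • x + b • y) ≤ (a : EReal) * f x + (b : EReal) * f y

/-- `f ∈ Γ₀(H)`: proper (never `⊥`, not identically `⊤`), convex and lower semicontinuous. -/
def Gamma0 (f : H → EReal) : Prop :=
  (∃ x, f x ≠ ⊤) ∧ (∀ x, f x ≠ ⊥) ∧ ERealConvexOn f ∧ LowerSemicontinuous f

/-- `p` is the proximal point of `f` at `x`, i.e. `p` minimizes `y ↦ f y + (1/2)‖x - y‖²`. -/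
def IsProx (f : H → EReal) (x p : H) : Prop :=
  ∀ y : H, f p + (((1:ℝ)/2 * ‖x - p‖ ^ 2 : ℝ) : EReal)
    ≤ f y + (((1:ℝ)/2 * ‖x - y‖ ^ 2 : ℝ) : EReal)

/-- The Fenchel (Legendre-Fenchel) conjugate of `f`. -/
def fenchel (f : H → EReal) (p : H) : EReal :=
  ⨆ v : H, ((⟪p, v⟫_ℝ : ℝ) : EReal) - f v

/-- The (convex) subdifferential of `f` at `x`. -/
def subdiff (f : H → EReal) (x : H) : Set H :=
  {p | ∀ y : H, f x + ((⟪p, y - x⟫_ℝ : ℝ) : EReal) ≤ f y}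

/-- The set of elements of minimal norm of `∂f(x)`; it is the singleton consisting of the
projection of `0` onto `∂f(x)` when the latter is nonempty, and empty otherwise. -/
def minNormSection (f : H → EReal) (x : H) : Set H :=
  {p | p ∈ subdiff f x ∧ ∀ u ∈ subdiff f x, ‖p‖ ≤ ‖u‖}


section aux
variable {f : H → EReal}


lemma ne_top_of_subdiff (hf : Gamma0 f) {x p : H} (hp : p ∈ subdiff f x) : f x ≠ ⊤ := by
  intro hx
  obtain ⟨y, hy⟩ := hf.1
  have h := hp y
  rw [hx] at h
  have : ((⟪p, y - x⟫_ℝ : ℝ) : EReal) ≠ ⊥ := by simp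
  rw [EReal.top_add_of_ne_bot this] at h
  exact hy (top_le_iff.1 h)

lemma subdiff_real (hf : Gamma0 f) {x p : H} (hp : p ∈ subdiff f x) {y : H} (hy : f y ≠ ⊤) :
    (f x).toReal + ⟪p, y - x⟫_ℝ ≤ (f y).toReal := by
  have h := hp y
  rw [← EReal.coe_toReal (ne_top_of_subdiff hf hp) (hf.2.1 x),
    ← EReal.coe_toReal hy (hf.2.1 y), ← EReal.coe_add] at h
  exact_mod_cast h

lemma mem_subdiff_of_real (hf : Gamma0 f) {x p : H} (hx : f x ≠ ⊤)
    (h : ∀ y, f y ≠ ⊤ → (f x).toReal + ⟪p, y - x⟫_ℝ ≤ (f y).toReal) : p ∈ subdiff f x := by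
  intro y
  by_cases hy : f y = ⊤
  · rw [hy]; exact le_top
  · rw [← EReal.coe_toReal hx (hf.2.1 x), ← EReal.coe_toReal hy (hf.2.1 y), ← EReal.coe_add]
    exact_mod_cast h y hy

lemma gamma0_combo (hf : Gamma0 f) {x y : H} {a b : ℝ} (ha : 0 ≤ a) (hb : 0 ≤ b)
    (hab : a + b = 1) (hx : f x ≠ ⊤) (hy : f y ≠ ⊤) :
    f (a • x + b • y) ≠ ⊤ ∧
      (f (a • x + b • y)).toReal ≤ a * (f x).toReal + b * (f y).toReal := by
  have h1 := hf.2.2.1 x y a b ha hb hab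
  rw [← EReal.coe_toReal hx (hf.2.1 x), ← EReal.coe_toReal hy (hf.2.1 y),
    ← EReal.coe_mul, ← EReal.coe_mul, ← EReal.coe_add] at h1
  constructor
  · intro ht; rw [ht, top_le_iff] at h1; exact (EReal.coe_ne_top _) h1
  · have := EReal.toReal_le_toReal h1 (hf.2.1 _) (EReal.coe_ne_top _)
    simpa only [EReal.toReal_coe] using this

lemma isClosed_subdiff (hf : Gamma0 f) (x : H) : IsClosed (subdiff f x) := by
  by_cases hx : f x = ⊤
  · have : subdiff f x = ∅ := by
      ext p; simp only [mem_empty_iff_false, iff_false]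
      exact fun hp => ne_top_of_subdiff hf hp hx
    rw [this]; exact isClosed_empty
  · have : subdiff f x = ⋂ y : {y : H // f y ≠ ⊤},
        {p : H | (f x).toReal + ⟪p, (y : H) - x⟫_ℝ ≤ (f (y : H)).toReal} := by
      ext p
      simp only [mem_iInter, mem_setOf_eq, Subtype.forall]
      exact ⟨fun hp y hy => subdiff_real hf hp hy, fun h => mem_subdiff_of_real hf hx h⟩
    rw [this]
    refine isClosed_iInter fun y => ?_
    exact isClosed_le (by continuity) continuous_const

lemma convex_subdiff (hf : Gamma0 f) (x : H) : Convex ℝ (subdiff f x) := by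
  intro p hp q hq a b ha hb hab
  have hx := ne_top_of_subdiff hf hp
  refine mem_subdiff_of_real hf hx fun y hy => ?_
  have h1 := subdiff_real hf hp hy
  have h2 := subdiff_real hf hq hy
  have : ⟪a • p + b • q, y - x⟫_ℝ = a * ⟪p, y - x⟫_ℝ + b * ⟪q, y - x⟫_ℝ := by
    simp [inner_add_left, real_inner_smul_left]
  rw [this]
  have e1 := mul_le_mul_of_nonneg_left h1 ha
  have e2 := mul_le_mul_of_nonneg_left h2 hb
  rw [mul_add] at e1 e2
  have e3 : a * (f x).toReal + b * (f x).toReal = (f x).toReal := by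
    rw [← add_mul, hab, one_mul]
  have e4 : a * (f y).toReal + b * (f y).toReal = (f y).toReal := by
    rw [← add_mul, hab, one_mul]
  linarith

lemma minNorm_exists (hf : Gamma0 f) {x : H} (hx : (subdiff f x).Nonempty) :
    (minNormSection f x).Nonempty := by
  obtain ⟨v, hv, hvn⟩ := exists_norm_eq_iInf_of_complete_convex hx
    ((isClosed_subdiff hf x).isComplete) (convex_subdiff hf x) 0
  refine ⟨v, hv, fun u hu => ?_⟩
  haveI : Nonempty (subdiff f x) := hx.to_subtype
  have h1 : (⨅ w : subdiff f x, ‖(0:H) - w‖) ≤ ‖(0:H) - u‖ :=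
    ciInf_le ⟨0, Set.forall_mem_range.2 fun _ => norm_nonneg _⟩ (⟨u, hu⟩ : subdiff f x)
  have h2 : ‖v‖ = ‖(0:H) - v‖ := by simp
  have h3 : ‖(0:H) - u‖ = ‖u‖ := by simp
  rw [h2, hvn]
  rw [h3] at h1
  exact h1


lemma exists_affine_minorant (hf : Gamma0 f) :
    ∃ (L : H →L[ℝ] ℝ) (c : ℝ), ∀ y, ((L y + c : ℝ) : EReal) ≤ f y := by
  obtain ⟨x₀, hx₀⟩ := hf.1
  have hx₀b := hf.2.1 x₀
  set r₀ : ℝ := (f x₀).toReal with hr₀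
  have hfx₀ : f x₀ = (r₀ : EReal) := (EReal.coe_toReal hx₀ hx₀b).symm
  set epi : Set (H × ℝ) := {z | f z.1 ≤ (z.2 : EReal)} with hepi
  have hconv : Convex ℝ epi := by
    rintro ⟨u, r⟩ hu ⟨v, s⟩ hv a b ha hb hab
    simp only [hepi, mem_setOf_eq] at hu hv ⊢
    have hu' : f u ≠ ⊤ := fun ht => by rw [ht, top_le_iff] at hu; exact EReal.coe_ne_top _ hu
    have hv' : f v ≠ ⊤ := fun ht => by rw [ht, top_le_iff] at hv; exact EReal.coe_ne_top _ hv
    have h1 := hf.2.2.1 u v a b ha hb hab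
    rw [← EReal.coe_toReal hu' (hf.2.1 u), ← EReal.coe_toReal hv' (hf.2.1 v),
      ← EReal.coe_mul, ← EReal.coe_mul, ← EReal.coe_add] at h1
    refine h1.trans ?_
    rw [EReal.coe_le_coe_iff]
    have h2 : (f u).toReal ≤ r := by
      rw [← EReal.coe_le_coe_iff, EReal.coe_toReal hu' (hf.2.1 u)]; exact hu
    have h3 : (f v).toReal ≤ s := by
      rw [← EReal.coe_le_coe_iff, EReal.coe_toReal hv' (hf.2.1 v)]; exact hv
    have := mul_le_mul_of_nonneg_left h2 ha
    have := mul_le_mul_of_nonneg_left h3 hb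
    simp only [Prod.smul_mk, Prod.mk_add_mk, smul_eq_mul]
    linarith
  have hclosed : IsClosed epi := by
    rw [← isOpen_compl_iff, isOpen_iff_mem_nhds]
    rintro ⟨z1, z2⟩ hz
    simp only [mem_compl_iff, hepi, mem_setOf_eq, not_le] at hz
    obtain ⟨c, hc1, hc2⟩ := exists_between hz
    have h1 : ∀ᶠ w in 𝓝 z1, c < f w := hf.2.2.2 z1 c hc2
    have h2 : ∀ᶠ t : ℝ in 𝓝 z2, ((t : ℝ) : EReal) < c := by
      rcases eq_or_ne c ⊤ with rfl | hct
      · exact Eventually.of_forall fun t => EReal.coe_lt_top _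
      · have hcb : c ≠ ⊥ := fun hb => by rw [hb] at hc1; exact not_lt_bot hc1
        have hz2 : z2 < c.toReal := by
          rw [← EReal.coe_lt_coe_iff, EReal.coe_toReal hct hcb]; exact hc1
        filter_upwards [Iio_mem_nhds hz2] with t ht
        calc (t : EReal) < (c.toReal : EReal) := EReal.coe_lt_coe_iff.2 ht
        _ = c := EReal.coe_toReal hct hcb
    filter_upwards [h1.prod_nhds h2] with z hz'
    simp only [mem_compl_iff, hepi, mem_setOf_eq, not_le]
    exact hz'.2.trans hz'.1
  have hnotmem : ((x₀, r₀ - 1) : H × ℝ) ∉ epi := by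
    simp only [hepi, mem_setOf_eq, hfx₀, EReal.coe_le_coe_iff, not_le]
    linarith
  obtain ⟨Φ, u, hΦ, hu⟩ := geometric_hahn_banach_closed_point hconv hclosed hnotmem
  set β : ℝ := Φ (0, 1) with hβdef
  have hsplit : ∀ (x : H) (r : ℝ), Φ (x, r) = Φ (x, 0) + r * β := by
    intro x r
    have : ((x, r) : H × ℝ) = (x, 0) + r • ((0 : H), (1 : ℝ)) := by
      simp [Prod.ext_iff]
    rw [this, map_add, map_smul]
    simp [hβdef]
  have hβneg : β < 0 := by
    rcases lt_trichotomy β 0 with h | h | h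
    · exact h
    · exfalso
      have h1 : Φ (x₀, r₀) < u := hΦ _ (by simp [hepi, hfx₀])
      have h2 : u < Φ (x₀, r₀ - 1) := hu
      rw [hsplit, h, mul_zero] at h1 h2
      linarith
    · exfalso
      have key : ∀ t : ℝ, r₀ ≤ t → Φ (x₀, 0) + t * β < u := by
        intro t ht
        have : ((x₀, t) : H × ℝ) ∈ epi := by
          simp only [hepi, mem_setOf_eq, hfx₀, EReal.coe_le_coe_iff]; exact ht
        have := hΦ _ this
        rwa [hsplit] at this
      have h1 := key (max r₀ ((u - Φ (x₀, 0)) / β + 1)) (le_max_left _ _)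
      have h2 : (u - Φ (x₀, 0)) / β + 1 ≤ max r₀ ((u - Φ (x₀, 0)) / β + 1) := le_max_right _ _
      have h3 : ((u - Φ (x₀, 0)) / β + 1) * β ≤ max r₀ ((u - Φ (x₀, 0)) / β + 1) * β := by
        nlinarith
      have h4 : ((u - Φ (x₀, 0)) / β + 1) * β = u - Φ (x₀, 0) + β := by
        field_simp
      nlinarith
  set γ : ℝ := -β with hγ
  have hγpos : 0 < γ := by simp [hγ]; linarith
  refine ⟨γ⁻¹ • (Φ.comp (ContinuousLinearMap.inl ℝ H ℝ)), -u / γ, fun y => ?_⟩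
  by_cases hy : f y = ⊤
  · rw [hy]; exact le_top
  · have hyb := hf.2.1 y
    rw [← EReal.coe_toReal hy hyb, EReal.coe_le_coe_iff]
    have hmem : ((y, (f y).toReal) : H × ℝ) ∈ epi := by
      simp [hepi, EReal.coe_toReal hy hyb]
    have h1 := hΦ _ hmem
    rw [hsplit] at h1
    simp only [ContinuousLinearMap.smul_apply, ContinuousLinearMap.comp_apply,
      ContinuousLinearMap.inl_apply, smul_eq_mul]
    have : Φ (y, 0) + (f y).toReal * β < u := h1
    have hg : γ ≠ 0 := ne_of_gt hγpos
    have heq : γ⁻¹ * Φ (y, 0) + -u / γ = (Φ (y, 0) - u) / γ := by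
      field_simp; ring
    rw [heq, div_le_iff₀ hγpos]
    have hprod : (f y).toReal * γ = -((f y).toReal * β) := by rw [hγ]; ring
    linarith

lemma exists_prox (hf : Gamma0 f) (L : H →L[ℝ] ℝ) (c₀ : ℝ)
    (hL : ∀ y, ((L y + c₀ : ℝ) : EReal) ≤ f y) {k : ℝ} (hk : 0 < k) (z : H) :
    ∃ m, f m ≠ ⊤ ∧ ∀ y, f y ≠ ⊤ →
      (f m).toReal + k * ‖z - m‖ ^ 2 ≤ (f y).toReal + k * ‖z - y‖ ^ 2 := by
  classical
  have hbot := hf.2.1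
  have hLr : ∀ y, f y ≠ ⊤ → L y + c₀ ≤ (f y).toReal := by
    intro y hy
    have h := hL y
    rwa [← EReal.coe_toReal hy (hbot y), EReal.coe_le_coe_iff] at h
  set Fr : H → ℝ := fun y => (f y).toReal + k * ‖z - y‖ ^ 2 with hFr
  set A : Set ℝ := Fr '' {y | f y ≠ ⊤} with hA
  obtain ⟨x₀, hx₀⟩ := hf.1
  have hAne : A.Nonempty := ⟨Fr x₀, x₀, hx₀, rfl⟩
  have hlow : ∀ y, f y ≠ ⊤ → c₀ - ‖L‖ * ‖z‖ - ‖L‖ ^ 2 / (4 * k) ≤ Fr y := by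
    intro y hy
    have h1 := hLr y hy
    have h2 : |L y| ≤ ‖L‖ * ‖y‖ := by rw [← Real.norm_eq_abs]; exact L.le_opNorm y
    have h3 : ‖y‖ ≤ ‖z‖ + ‖z - y‖ := by
      calc ‖y‖ = ‖z - (z - y)‖ := by rw [sub_sub_cancel]
      _ ≤ ‖z‖ + ‖z - y‖ := norm_sub_le _ _
    have h4 : (0:ℝ) ≤ ‖L‖ := norm_nonneg _
    have h5 := norm_nonneg (z - y); have h6 := norm_nonneg z
    have hdiv : ‖L‖ ^ 2 / (4 * k) * (4 * k) = ‖L‖ ^ 2 := by field_simp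
    simp only [hFr]
    nlinarith [sq_nonneg (2 * k * ‖z - y‖ - ‖L‖), (abs_le.1 h2).1,
      mul_le_mul_of_nonneg_left h3 h4]
  have hbdd : BddBelow A := by
    refine ⟨c₀ - ‖L‖ * ‖z‖ - ‖L‖ ^ 2 / (4 * k), ?_⟩
    rintro r ⟨y, hy, rfl⟩; exact hlow y hy
  set μ : ℝ := sInf A with hμ
  have hμle : ∀ y, f y ≠ ⊤ → μ ≤ Fr y := fun y hy => csInf_le hbdd ⟨y, hy, rfl⟩
  have hseq : ∀ n : ℕ, ∃ y, f y ≠ ⊤ ∧ Fr y < μ + 1 / ((n:ℝ) + 1) := by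
    intro n
    have hpos : μ < μ + 1 / ((n:ℝ) + 1) := by
      have : (0:ℝ) < 1 / ((n:ℝ) + 1) := by positivity
      linarith
    obtain ⟨r, hrA, hr⟩ := exists_lt_of_csInf_lt hAne hpos
    obtain ⟨y, hy, rfl⟩ := hrA
    exact ⟨y, hy, hr⟩
  choose y hy1 hy2 using hseq
  have hkey : ∀ u v : H, f u ≠ ⊤ → f v ≠ ⊤ →
      k / 4 * ‖u - v‖ ^ 2 ≤ (Fr u + Fr v) / 2 - μ := by
    intro u v hu hv
    have hcombo := gamma0_combo hf (by norm_num : (0:ℝ) ≤ 1/2) (by norm_num : (0:ℝ) ≤ 1/2)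
      (by norm_num) hu hv
    set m := (1/2 : ℝ) • u + (1/2 : ℝ) • v with hmdef
    have hm := hμle m hcombo.1
    have hpar : ‖z - m‖ ^ 2 =
        1/2 * ‖z - u‖ ^ 2 + 1/2 * ‖z - v‖ ^ 2 - 1/4 * ‖u - v‖ ^ 2 := by
      have h1 : z - m = (1/2 : ℝ) • ((z - u) + (z - v)) := by
        rw [hmdef]; module
      have h2 := parallelogram_law_with_norm ℝ (z - u) (z - v)
      have h3 : (z - u) - (z - v) = v - u := by abel
      rw [h3] at h2
      have h4 : ‖z - m‖ = 1/2 * ‖(z - u) + (z - v)‖ := by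
        rw [h1, norm_smul]; simp
      have h5 : ‖v - u‖ = ‖u - v‖ := norm_sub_rev _ _
      rw [h5] at h2
      have h2' : ‖z - u + (z - v)‖ ^ 2 + ‖u - v‖ ^ 2 = 2 * (‖z - u‖ ^ 2 + ‖z - v‖ ^ 2) := by
        rw [pow_two, pow_two, pow_two, pow_two]; linarith [h2]
      rw [h4, mul_pow]
      nlinarith [h2']
    have hval := hcombo.2
    simp only [hFr] at hm ⊢
    nlinarith [hm, hval, hpar]
  have hcauchy : CauchySeq y := by
    rw [Metric.cauchySeq_iff]
    intro ε hε
    obtain ⟨N, hN⟩ := exists_nat_gt (8 / (k * ε ^ 2))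
    refine ⟨N, fun a ha b hb => ?_⟩
    have h1 := hkey (y a) (y b) (hy1 a) (hy1 b)
    have h2 := hy2 a; have h3 := hy2 b
    have h4 : 1 / ((a:ℝ) + 1) ≤ 1 / ((N:ℝ) + 1) := by
      apply one_div_le_one_div_of_le (by positivity)
      have := (Nat.cast_le (α := ℝ)).2 ha; linarith
    have h5 : 1 / ((b:ℝ) + 1) ≤ 1 / ((N:ℝ) + 1) := by
      apply one_div_le_one_div_of_le (by positivity)
      have := (Nat.cast_le (α := ℝ)).2 hb; linarith
    have hNpos : (0:ℝ) < (N:ℝ) + 1 := by positivity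
    have h6 : 8 / (k * ε ^ 2) < (N:ℝ) + 1 := by
      have : ((N:ℝ)) ≤ (N:ℝ) + 1 - 1 := by linarith
      linarith
    have hkε : 0 < k * ε ^ 2 := by positivity
    have h7 : 1 / ((N:ℝ) + 1) < k * ε ^ 2 / 8 := by
      rw [div_lt_div_iff₀ hNpos (by norm_num : (0:ℝ) < 8)]
      rw [div_lt_iff₀ hkε] at h6
      nlinarith
    have h8 : k / 4 * ‖y a - y b‖ ^ 2 < k * ε ^ 2 / 8 := by linarith
    have hd2 : ‖y a - y b‖ ^ 2 < ε ^ 2 := by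
      nlinarith [h8, hk, sq_nonneg (‖y a - y b‖), sq_nonneg ε]
    rw [dist_eq_norm]
    exact lt_of_pow_lt_pow_left₀ 2 (le_of_lt hε) hd2
  obtain ⟨m, hm⟩ := cauchySeq_tendsto_of_complete hcauchy
  have hfm : f m ≤ ((μ - k * ‖z - m‖ ^ 2 : ℝ) : EReal) := by
    by_contra hcon
    rw [not_le] at hcon
    obtain ⟨c, hc1, hc2⟩ := exists_between hcon
    have hct : c ≠ ⊤ := (lt_of_lt_of_le hc2 le_top).ne
    have hcb : c ≠ ⊥ := by
      intro hb'; rw [hb'] at hc1; exact not_lt_bot hc1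
    set t : ℝ := c.toReal with ht
    have hcoet : (t : EReal) = c := EReal.coe_toReal hct hcb
    have hev := hf.2.2.2 m c hc2
    have hev2 : ∀ᶠ n in atTop, c < f (y n) := hm.eventually hev
    have hcont : Tendsto (fun n : ℕ => μ + 1 / ((n:ℝ) + 1) - k * ‖z - y n‖ ^ 2) atTop
        (𝓝 (μ + 0 - k * ‖z - m‖ ^ 2)) := by
      apply Tendsto.sub
      · apply Tendsto.add tendsto_const_nhds
        exact tendsto_one_div_add_atTop_nhds_zero_nat
      · apply Tendsto.const_mul
        have : Tendsto (fun n : ℕ => z - y n) atTop (𝓝 (z - m)) :=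
          tendsto_const_nhds.sub hm
        exact (this.norm).pow 2
    have hle : ∀ᶠ n : ℕ in atTop, t ≤ μ + 1 / ((n:ℝ) + 1) - k * ‖z - y n‖ ^ 2 := by
      filter_upwards [hev2] with n hn
      have htn : t < (f (y n)).toReal := by
        rw [← EReal.coe_lt_coe_iff, hcoet, EReal.coe_toReal (hy1 n) (hbot _)]
        exact hn
      have h2 := hy2 n
      simp only [hFr] at h2
      linarith
    have hfin := ge_of_tendsto hcont hle
    have hlt : μ - k * ‖z - m‖ ^ 2 < t := by
      rw [← EReal.coe_lt_coe_iff, hcoet]; exact hc1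
    linarith
  have hmt : f m ≠ ⊤ := by
    intro ht; rw [ht, top_le_iff] at hfm; exact EReal.coe_ne_top _ hfm
  have hmr : (f m).toReal ≤ μ - k * ‖z - m‖ ^ 2 := by
    have := EReal.toReal_le_toReal hfm (hbot m) (EReal.coe_ne_top _)
    simpa only [EReal.toReal_coe] using this
  refine ⟨m, hmt, fun y' hy' => ?_⟩
  have := hμle y' hy'
  simp only [hFr] at this
  linarith

lemma prox_subdiff (hf : Gamma0 f) {k : ℝ} (hk : 0 < k) {z m : H} (hm : f m ≠ ⊤)
    (hmin : ∀ y, f y ≠ ⊤ →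
      (f m).toReal + k * ‖z - m‖ ^ 2 ≤ (f y).toReal + k * ‖z - y‖ ^ 2) :
    (2 * k) • (z - m) ∈ subdiff f m := by
  refine mem_subdiff_of_real hf hm fun y hy => ?_
  have key : ∀ t : ℝ, 0 < t → t ≤ 1 →
      (f m).toReal + ⟪(2 * k) • (z - m), y - m⟫_ℝ ≤ (f y).toReal + k * t * ‖y - m‖ ^ 2 := by
    intro t ht ht1
    have hcombo := gamma0_combo hf (by linarith : (0:ℝ) ≤ 1 - t) (le_of_lt ht)
      (by ring) hm hy
    set w := (1 - t) • m + t • y with hw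
    have hmin' := hmin w hcombo.1
    have hnorm : ‖z - w‖ ^ 2 =
        ‖z - m‖ ^ 2 - 2 * t * ⟪z - m, y - m⟫_ℝ + t ^ 2 * ‖y - m‖ ^ 2 := by
      have h1 : z - w = (z - m) - t • (y - m) := by rw [hw]; module
      rw [h1, norm_sub_sq_real, real_inner_smul_right, norm_smul]
      rw [Real.norm_eq_abs, abs_of_pos ht]
      ring
    have hip : ⟪(2 * k) • (z - m), y - m⟫_ℝ = 2 * k * ⟪z - m, y - m⟫_ℝ :=
      real_inner_smul_left _ _ _
    have hval := hcombo.2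
    rw [hnorm] at hmin'
    rw [hip]
    have hcomb : t * ((f m).toReal + 2 * k * ⟪z - m, y - m⟫_ℝ) ≤
        t * ((f y).toReal + k * t * ‖y - m‖ ^ 2) := by nlinarith [hmin', hval]
    have := le_of_mul_le_mul_left hcomb ht
    linarith
  by_contra hlt
  rw [not_le] at hlt
  set ε := (f m).toReal + ⟪(2 * k) • (z - m), y - m⟫_ℝ - (f y).toReal with hε
  have hεpos : 0 < ε := by rw [hε]; linarith
  set t := min 1 (ε / (2 * (k * ‖y - m‖ ^ 2 + 1))) with htdef
  have hden : 0 < 2 * (k * ‖y - m‖ ^ 2 + 1) := by positivity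
  have htpos : 0 < t := lt_min one_pos (by positivity)
  have ht1 : t ≤ 1 := min_le_left _ _
  have hkey := key t htpos ht1
  have htle : t ≤ ε / (2 * (k * ‖y - m‖ ^ 2 + 1)) := min_le_right _ _
  have hsmall : k * t * ‖y - m‖ ^ 2 ≤ ε / 2 := by
    have h1 : k * t * ‖y - m‖ ^ 2 ≤ (k * ‖y - m‖ ^ 2 + 1) * t := by nlinarith [sq_nonneg ‖y - m‖, htpos]
    have h2 : (k * ‖y - m‖ ^ 2 + 1) * t ≤ (k * ‖y - m‖ ^ 2 + 1) * (ε / (2 * (k * ‖y - m‖ ^ 2 + 1))) := by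
      apply mul_le_mul_of_nonneg_left htle (by positivity)
    have h3 : (k * ‖y - m‖ ^ 2 + 1) * (ε / (2 * (k * ‖y - m‖ ^ 2 + 1))) = ε / 2 := by
      field_simp
    linarith
  linarith

lemma prox_approx (hf : Gamma0 f) {c : H} (hc : f c ≠ ⊤) {δ : ℝ} (hδ : 0 < δ) :
    ∃ m q, q ∈ subdiff f m ∧ f m ≠ ⊤ ∧ ‖m - c‖ ≤ δ ∧ ‖q‖ * ‖m - c‖ ≤ δ ∧
      (f m).toReal ≤ (f c).toReal := by
  obtain ⟨L, c₀, hL⟩ := exists_affine_minorant hf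
  have hbot := hf.2.1
  -- lower semicontinuity near c
  have hlsc : ∃ ρ > 0, ∀ w, dist w c < ρ → ((f c).toReal - δ / 2 : ℝ) < (f w).toReal ∨ f w = ⊤ := by
    have hlt : (((f c).toReal - δ / 2 : ℝ) : EReal) < f c := by
      conv_rhs => rw [← EReal.coe_toReal hc (hbot c)]
      rw [EReal.coe_lt_coe_iff]; linarith
    have hev := hf.2.2.2 c _ hlt
    rw [Metric.eventually_nhds_iff] at hev
    obtain ⟨ρ, hρ, hball⟩ := hev
    refine ⟨ρ, hρ, fun w hw => ?_⟩
    by_cases hwt : f w = ⊤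
    · exact Or.inr hwt
    · left
      have := hball hw
      beta_reduce at this
      rwa [← EReal.coe_toReal hwt (hbot w), gt_iff_lt, EReal.coe_lt_coe_iff] at this
  obtain ⟨ρ, hρ, hball⟩ := hlsc
  set ε : ℝ := min δ (ρ / 2) with hεdef
  have hεpos : 0 < ε := lt_min hδ (by linarith)
  -- constants
  set C₁ : ℝ := (f c).toReal + ‖L‖ * ‖c‖ - c₀ + ‖L‖ with hC₁
  obtain ⟨k, hkdef⟩ : ∃ k : ℝ, k = ‖L‖ + (|C₁| + 1) / ε ^ 2 + 1 := ⟨_, rfl⟩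
  have hk : 0 < k := by
    rw [hkdef]; positivity
  obtain ⟨m, hmt, hmin⟩ := exists_prox hf L c₀ hL hk c
  set q := (2 * k) • (c - m) with hq
  have hqs : q ∈ subdiff f m := prox_subdiff hf hk hmt hmin
  -- minimality at y = c
  have h1 : (f m).toReal + k * ‖c - m‖ ^ 2 ≤ (f c).toReal := by
    have := hmin c hc; simpa using this
  -- affine lower bound on f m
  have h2 : L m + c₀ ≤ (f m).toReal := by
    have h := hL m
    rwa [← EReal.coe_toReal hmt (hbot m), EReal.coe_le_coe_iff] at h
  have h3 : |L m| ≤ ‖L‖ * ‖m‖ := by rw [← Real.norm_eq_abs]; exact L.le_opNorm m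
  have h4 : ‖m‖ ≤ ‖c‖ + ‖c - m‖ := by
    calc ‖m‖ = ‖c - (c - m)‖ := by rw [sub_sub_cancel]
    _ ≤ ‖c‖ + ‖c - m‖ := norm_sub_le _ _
  have hLn : (0:ℝ) ≤ ‖L‖ := norm_nonneg _
  -- bound on ‖c - m‖
  have he2 : (k - ‖L‖) * ‖c - m‖ ^ 2 ≤ |C₁| + 1 - 1 + 1 := by
    have h5 : ‖c - m‖ ≤ 1 + ‖c - m‖ ^ 2 := by nlinarith [sq_nonneg (‖c - m‖ - 1)]
    have h6 : 0 ≤ ‖c - m‖ := norm_nonneg _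
    have h7 := abs_le.1 h3
    have h8 : C₁ ≤ |C₁| := le_abs_self _
    nlinarith [mul_le_mul_of_nonneg_left h4 hLn]
  have hkL : (|C₁| + 1) / ε ^ 2 + 1 ≤ k - ‖L‖ := by rw [hkdef]; ring_nf; linarith
  have hee : ‖c - m‖ ^ 2 < ε ^ 2 := by
    by_contra hcon
    rw [not_lt] at hcon
    have h9 : 0 < k - ‖L‖ := by
      have : (0:ℝ) < (|C₁| + 1) / ε ^ 2 + 1 := by positivity
      linarith
    have h10 : (k - ‖L‖) * ε ^ 2 ≤ (k - ‖L‖) * ‖c - m‖ ^ 2 :=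
      mul_le_mul_of_nonneg_left hcon (le_of_lt h9)
    have h11 : ((|C₁| + 1) / ε ^ 2 + 1) * ε ^ 2 ≤ (k - ‖L‖) * ε ^ 2 := by
      apply mul_le_mul_of_nonneg_right hkL (by positivity)
    have h12 : ((|C₁| + 1) / ε ^ 2 + 1) * ε ^ 2 = |C₁| + 1 + ε ^ 2 := by
      field_simp
    nlinarith [sq_nonneg ε, hεpos]
  have hemε : ‖c - m‖ < ε := lt_of_pow_lt_pow_left₀ 2 (le_of_lt hεpos) hee
  have hmc : ‖m - c‖ < ε := by rwa [norm_sub_rev] at hemε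
  -- lsc bound
  have hfm_lb : (f c).toReal - δ / 2 < (f m).toReal := by
    have hd : dist m c < ρ := by
      rw [dist_eq_norm]
      have : ε ≤ ρ / 2 := min_le_right _ _
      linarith
    rcases hball m hd with h | h
    · exact h
    · exact absurd h hmt
  refine ⟨m, q, hqs, hmt, ?_, ?_, ?_⟩
  · have : ε ≤ δ := min_le_left _ _; linarith
  · -- ‖q‖ * ‖m - c‖ = 2k ‖c-m‖² ≤ 2 (fc - fm) ≤ δ
    have hn : ‖q‖ = 2 * k * ‖c - m‖ := by
      rw [hq, norm_smul, Real.norm_eq_abs, abs_of_pos (by linarith : (0:ℝ) < 2 * k)]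
    have : ‖q‖ * ‖m - c‖ = 2 * (k * ‖c - m‖ ^ 2) := by
      rw [hn, norm_sub_rev m c]; ring
    rw [this]
    have hkk : k * ‖c - m‖ ^ 2 ≤ (f c).toReal - (f m).toReal := by linarith
    linarith
  · nlinarith [sq_nonneg ‖c - m‖, hk, h1]

end aux

/-- auxiliary quadratic form used in the bisection argument -/
def Bfun (S : H → H) (a b : H) : ℝ := ⟪S a - S b, a - b⟫_ℝ

lemma Bfun_bisect (S : H → H) (a b m : H) :
    Bfun S a m + Bfun S m b = Bfun S a b / 2 +
      ⟪(2:ℝ) • S m - S a - S b, m - ((1/2:ℝ) • a + (1/2:ℝ) • b)⟫_ℝ := by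
  simp only [Bfun]
  have h1 : a - m = (1/2:ℝ) • (a - b) - (m - ((1/2:ℝ) • a + (1/2:ℝ) • b)) := by module
  have h2 : m - b = (1/2:ℝ) • (a - b) + (m - ((1/2:ℝ) • a + (1/2:ℝ) • b)) := by module
  rw [h1, h2]
  simp only [inner_sub_left, inner_sub_right, inner_add_right, real_inner_smul_right,
    real_inner_smul_left]
  ring


lemma subdiff_mono (f g : H → EReal) (hf : Gamma0 f) (hg : Gamma0 g)
    (h : ∀ x : H, minNormSection f x = minNormSection g x) :
    ∀ x : H, subdiff f x ⊆ subdiff g x := by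
  classical
  have hsel : ∀ x, (subdiff f x).Nonempty → ∃ s, s ∈ subdiff f x ∧ s ∈ subdiff g x ∧
      ∀ u ∈ subdiff f x, ‖s‖ ≤ ‖u‖ := by
    intro x hx
    obtain ⟨s, hs⟩ := minNorm_exists hf hx
    have hs' : s ∈ minNormSection g x := (h x) ▸ hs
    exact ⟨s, hs.1, hs'.1, hs.2⟩
  choose! S hS1 hS2 hS3 using hsel
  have hfintop : ∀ x, (subdiff f x).Nonempty → f x ≠ ⊤ := by
    rintro x ⟨p, hp⟩; exact ne_top_of_subdiff hf hp
  have hgintop : ∀ x, (subdiff f x).Nonempty → g x ≠ ⊤ := by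
    intro x hx; exact ne_top_of_subdiff hg (hS2 x hx)
  set φ : H → ℝ := fun x => (f x).toReal - (g x).toReal with hφ
  have hbridge : ∀ a b, (subdiff f a).Nonempty → (subdiff f b).Nonempty →
      |φ a - φ b| ≤ Bfun S a b := by
    intro a b ha hb
    have h1 := subdiff_real hf (hS1 a ha) (hfintop b hb)
    have h2 := subdiff_real hg (hS2 b hb) (hgintop a ha)
    have h3 := subdiff_real hf (hS1 b hb) (hfintop a ha)
    have h4 := subdiff_real hg (hS2 a ha) (hgintop b hb)
    have e1 : ⟪S a, b - a⟫_ℝ = -⟪S a, a - b⟫_ℝ := by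
      rw [show b - a = -(a - b) by abel, inner_neg_right]
    have e2 : Bfun S a b = ⟪S a, a - b⟫_ℝ - ⟪S b, a - b⟫_ℝ := by
      simp [Bfun, inner_sub_left]
    rw [e1] at h1 h4
    rw [e2]
    simp only [hφ]
    rw [abs_le]
    constructor
    · linarith
    · linarith
  have hbisect : ∀ a b, (subdiff f a).Nonempty → (subdiff f b).Nonempty → ∀ δ : ℝ, 0 < δ →
      ∃ m, (subdiff f m).Nonempty ∧ Bfun S a m + Bfun S m b ≤ Bfun S a b / 2 + δ := by
    intro a b ha hb δ hδ
    have hct : f ((1/2:ℝ) • a + (1/2:ℝ) • b) ≠ ⊤ :=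
      (gamma0_combo hf (by norm_num : (0:ℝ) ≤ 1/2) (by norm_num : (0:ℝ) ≤ 1/2)
        (by norm_num) (hfintop a ha) (hfintop b hb)).1
    have hδP : 0 < δ / (3 + ‖S a‖ + ‖S b‖) := by positivity
    obtain ⟨m, q, hq, hmt, hme, hqe, _⟩ := prox_approx hf hct hδP
    have hmNE : (subdiff f m).Nonempty := ⟨q, hq⟩
    have hSm : ‖S m‖ ≤ ‖q‖ := hS3 m hmNE q hq
    refine ⟨m, hmNE, ?_⟩
    rw [Bfun_bisect S a b m]
    have hCS : ⟪(2:ℝ) • S m - S a - S b, m - ((1/2:ℝ) • a + (1/2:ℝ) • b)⟫_ℝ ≤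
        ‖(2:ℝ) • S m - S a - S b‖ * ‖m - ((1/2:ℝ) • a + (1/2:ℝ) • b)‖ :=
      real_inner_le_norm _ _
    have htri : ‖(2:ℝ) • S m - S a - S b‖ ≤ 2 * ‖S m‖ + ‖S a‖ + ‖S b‖ := by
      calc ‖(2:ℝ) • S m - S a - S b‖ ≤ ‖(2:ℝ) • S m - S a‖ + ‖S b‖ := norm_sub_le _ _
      _ ≤ ‖(2:ℝ) • S m‖ + ‖S a‖ + ‖S b‖ := by linarith [norm_sub_le ((2:ℝ) • S m) (S a)]
      _ = 2 * ‖S m‖ + ‖S a‖ + ‖S b‖ := by rw [norm_smul]; norm_num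
    have hen : (0:ℝ) ≤ ‖m - ((1/2:ℝ) • a + (1/2:ℝ) • b)‖ := norm_nonneg _
    have hfld : (3 + ‖S a‖ + ‖S b‖) * (δ / (3 + ‖S a‖ + ‖S b‖)) = δ := by
      field_simp
    have hSa := norm_nonneg (S a); have hSb := norm_nonneg (S b)
    have hSmn := norm_nonneg (S m); have hqn := norm_nonneg q
    have hmul := mul_le_mul_of_nonneg_right htri hen
    have hmul2 := mul_le_mul_of_nonneg_right hSm hen
    have hmul3 := mul_le_mul_of_nonneg_left hme (by linarith : (0:ℝ) ≤ ‖S a‖ + ‖S b‖)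
    nlinarith [hCS, hmul, hmul2, hmul3, hqe, hδP]
  have hmain : ∀ n : ℕ, ∀ a b, (subdiff f a).Nonempty → (subdiff f b).Nonempty →
      ∀ δ : ℝ, 0 < δ → |φ a - φ b| ≤ Bfun S a b / 2 ^ n + δ := by
    intro n
    induction n with
    | zero =>
      intro a b ha hb δ hδ
      have hbr := hbridge a b ha hb
      simp only [pow_zero, div_one]
      linarith
    | succ n ih =>
      intro a b ha hb δ hδ
      have hδ2 : 0 < 2 ^ n * (δ / 2) := by positivity
      obtain ⟨m, hm, hB⟩ := hbisect a b ha hb _ hδ2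
      have h1 := ih a m ha hm (δ/4) (by linarith)
      have h2 := ih m b hm hb (δ/4) (by linarith)
      have habs := abs_sub_le (φ a) (φ m) (φ b)
      have hp : (0:ℝ) < 2 ^ n := by positivity
      have h3 : (Bfun S a m + Bfun S m b) / 2 ^ n ≤
          (Bfun S a b / 2 + 2 ^ n * (δ / 2)) / 2 ^ n := by gcongr
      have h4 : (Bfun S a b / 2 + 2 ^ n * (δ / 2)) / 2 ^ n =
          Bfun S a b / 2 ^ (n + 1) + δ / 2 := by
        field_simp
        ring
      have h5 : Bfun S a m / 2 ^ n + Bfun S m b / 2 ^ n =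
          (Bfun S a m + Bfun S m b) / 2 ^ n := by ring
      calc |φ a - φ b| ≤ |φ a - φ m| + |φ m - φ b| := habs
      _ ≤ Bfun S a m / 2 ^ n + δ / 4 + (Bfun S m b / 2 ^ n + δ / 4) := by linarith
      _ ≤ Bfun S a b / 2 ^ (n + 1) + δ := by linarith
  have hconst : ∀ a b, (subdiff f a).Nonempty → (subdiff f b).Nonempty → φ a = φ b := by
    intro a b ha hb
    have habs : ∀ ε : ℝ, 0 < ε → |φ a - φ b| ≤ ε := by
      intro ε hε
      obtain ⟨n, hn⟩ := pow_unbounded_of_one_lt (Bfun S a b / (ε / 2)) (one_lt_two (α := ℝ))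
      have hp : (0:ℝ) < 2 ^ n := by positivity
      have hεp : (0:ℝ) < ε / 2 := by linarith
      have hlt : Bfun S a b / 2 ^ n < ε / 2 := by
        rw [div_lt_iff₀ hεp] at hn
        rw [div_lt_iff₀ hp]
        linarith [hn]
      have h1 := hmain n a b ha hb (ε / 2) hεp
      linarith
    by_contra hne
    have hpos : 0 < |φ a - φ b| := abs_pos.2 (sub_ne_zero.2 hne)
    have := habs (|φ a - φ b| / 2) (by linarith)
    linarith
  intro x p hp y
  have hxNE : (subdiff f x).Nonempty := ⟨p, hp⟩
  have hgx : g x ≠ ⊤ := hgintop x hxNE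
  by_cases hy : g y = ⊤
  · rw [hy]; exact le_top
  · have key : ∀ ε : ℝ, 0 < ε →
        (g x).toReal + ⟪p, y - x⟫_ℝ ≤ (g y).toReal + (‖p‖ + 1) * ε := by
      intro ε hε
      obtain ⟨m, q, hq, hmt, hme, hqe, hval⟩ := prox_approx hg hy hε
      have hmNEg : (subdiff g m).Nonempty := ⟨q, hq⟩
      have hmNE : (subdiff f m).Nonempty := by
        obtain ⟨s, hs⟩ := minNorm_exists hg hmNEg
        have hs' : s ∈ minNormSection f m := (h m).symm ▸ hs
        exact ⟨s, hs'.1⟩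
      have hfm := subdiff_real hf hp (hfintop m hmNE)
      have hphi := hconst m x hmNE hxNE
      simp only [hφ] at hphi
      have hsplit : ⟪p, y - x⟫_ℝ = ⟪p, m - x⟫_ℝ + ⟪p, y - m⟫_ℝ := by
        rw [← inner_add_right]; congr 1; abel
      have hip : ⟪p, y - m⟫_ℝ ≤ ‖p‖ * ε := by
        have h1 := real_inner_le_norm p (y - m)
        have h2 : ‖y - m‖ = ‖m - y‖ := norm_sub_rev _ _
        have h3 : ‖m - y‖ ≤ ε := hme
        nlinarith [norm_nonneg p]
      have hexp : (‖p‖ + 1) * ε = ‖p‖ * ε + ε := by ring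
      rw [hsplit, hexp]
      linarith [hfm, hval, hip, hphi, hε]
    have hle : (g x).toReal + ⟪p, y - x⟫_ℝ ≤ (g y).toReal := by
      by_contra hcon
      rw [not_le] at hcon
      have hdpos : 0 < (g x).toReal + ⟪p, y - x⟫_ℝ - (g y).toReal := by linarith
      have hnp : (0:ℝ) < ‖p‖ + 1 := by positivity
      have hkey := key (((g x).toReal + ⟪p, y - x⟫_ℝ - (g y).toReal) / (2 * (‖p‖ + 1)))
        (by positivity)
      have hsimp : (‖p‖ + 1) * (((g x).toReal + ⟪p, y - x⟫_ℝ - (g y).toReal) /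
          (2 * (‖p‖ + 1))) = ((g x).toReal + ⟪p, y - x⟫_ℝ - (g y).toReal) / 2 := by
        field_simp
      linarith
    rw [← EReal.coe_toReal hgx (hg.2.1 x), ← EReal.coe_toReal hy (hg.2.1 y), ← EReal.coe_add]
    exact_mod_cast hle


/-- If the subdifferentials of `f` and `g` have the same element of minimal norm
(the projection of `0`) at every point, then the subdifferentials coincide. -/
theorem subdiff_eq_of_minNormSection_eq
    (f g : H → EReal) (hf : Gamma0 f) (hg : Gamma0 g)
    (h : ∀ x : H, minNormSection f x = minNormSection g x) :
    ∀ x : H, subdiff f x = subdiff g x := by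
  intro x
  exact Set.Subset.antisymm (subdiff_mono f g hf hg h x)
    (subdiff_mono g f hg hf (fun x => (h x).symm) x)
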